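/- There exists an absolute constant c > 0 such that: if ν is a probability measure on ℝ^n supported on the Euclidean ball of radius D (i.e., if Y ∼ ν then ‖Y‖₂ ≤ D almost surely), and E = (ℝ^n, ‖·‖_E) is the normed space with ‖t‖_E = ‖⟨t, Y⟩‖_{ψ_2(ν)}, then the Gaussian mean width ℓ_E = E‖∑_{i=1}^n g_i e_i‖_E satisfies ℓ_E ≤ c·D, where g₁,...,g_n are independent standard Gaussians and (e_i) is the standard basis. -/

import Mathlib

open MeasureTheory ProbabilityTheory Real
open scoped ENNReal NNReal

lemma gauss_int (f : ℝ → ℝ) :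
    ∫ x, f x ∂(gaussianReal 0 1) = ∫ x, gaussianPDFReal 0 1 x * f x := by
  rw [gaussianReal_of_var_ne_zero _ one_ne_zero]
  have : (gaussianPDF 0 1) = fun x => ((gaussianPDFReal 0 1 x).toNNReal : ℝ≥0∞) := by
    ext x; rfl
  rw [this, integral_withDensity_eq_integral_smul]
  · congr 1; ext x
    simp [NNReal.smul_def, Real.coe_toNNReal _ (gaussianPDFReal_nonneg _ _ _)]
  · exact (measurable_gaussianPDFReal _ _).real_toNNReal

lemma gauss_integrable_iff (f : ℝ → ℝ) :
    Integrable f (gaussianReal 0 1) ↔ Integrable (fun x => gaussianPDFReal 0 1 x * f x) := by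
  rw [gaussianReal_of_var_ne_zero _ one_ne_zero]
  have : (gaussianPDF 0 1) = fun x => ((gaussianPDFReal 0 1 x).toNNReal : ℝ≥0∞) := by
    ext x; rfl
  rw [this, integrable_withDensity_iff_integrable_smul]
  · constructor <;> intro h <;> refine h.congr (ae_of_all _ fun x => ?_) <;>
      simp [NNReal.smul_def, Real.coe_toNNReal _ (gaussianPDFReal_nonneg _ _ _)]
  · exact (measurable_gaussianPDFReal _ _).real_toNNReal

lemma gauss_pdf_eq (x : ℝ) : gaussianPDFReal 0 1 x = (√(2*π))⁻¹ * exp (-(2⁻¹) * x^2) := by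
  simp [gaussianPDFReal]
  ring_nf
  tauto

lemma gauss_mgf (a : ℝ) :
    Integrable (fun x => exp (a*x)) (gaussianReal 0 1) ∧
    ∫ x, exp (a*x) ∂(gaussianReal 0 1) = exp (a^2/2) := by
  have key : ∀ x, gaussianPDFReal 0 1 x * exp (a*x)
      = (exp (a^2/2) * (√(2*π))⁻¹) * exp (-(2⁻¹) * (x-a)^2) := by
    intro x
    rw [gauss_pdf_eq, mul_assoc, ← Real.exp_add,
      show -(2⁻¹)*x^2 + a*x = a^2/2 + -(2⁻¹)*(x-a)^2 from by ring, Real.exp_add]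
    ring
  have hi : Integrable (fun x => gaussianPDFReal 0 1 x * exp (a*x)) := by
    simp_rw [key]
    exact ((integrable_exp_neg_mul_sq (by norm_num : (0:ℝ) < 2⁻¹)).comp_sub_right a).const_mul _
  constructor
  · rw [gauss_integrable_iff]; exact hi
  · rw [gauss_int]
    simp_rw [key]
    rw [integral_const_mul, integral_sub_right_eq_self (fun x => exp (-(2⁻¹) * x^2)) a,
      integral_gaussian]
    have h2 : √(π / 2⁻¹) = √(2*π) := by norm_num [mul_comm]
    rw [h2, mul_assoc, inv_mul_cancel₀ (by positivity), mul_one]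

lemma gauss_sq {a : ℝ} (ha0 : 0 ≤ a) (ha : a ≤ 4⁻¹) :
    Integrable (fun x => exp (a*x^2)) (gaussianReal 0 1) ∧
    ∫ x, exp (a*x^2) ∂(gaussianReal 0 1) ≤ √2 := by
  set b : ℝ := 2⁻¹ - a with hb
  have hbpos : 0 < b := by rw [hb]; nlinarith
  have key : ∀ x, gaussianPDFReal 0 1 x * exp (a*x^2)
      = (√(2*π))⁻¹ * exp (-b * x^2) := by
    intro x
    rw [gauss_pdf_eq, mul_assoc, ← Real.exp_add,
      show -(2⁻¹)*x^2 + a*x^2 = -b * x^2 from by rw [hb]; ring]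
  have hi : Integrable (fun x => gaussianPDFReal 0 1 x * exp (a*x^2)) := by
    simp_rw [key]
    exact (integrable_exp_neg_mul_sq hbpos).const_mul _
  constructor
  · rw [gauss_integrable_iff]; exact hi
  · rw [gauss_int]
    simp_rw [key]
    rw [integral_const_mul, integral_gaussian]
    have h1 : (0:ℝ) ≤ (√(2*π))⁻¹ * √(π/b) := by positivity
    calc (√(2*π))⁻¹ * √(π/b) = √(((√(2*π))⁻¹ * √(π/b))^2) := (Real.sqrt_sq h1).symm
    _ ≤ √2 := by
        apply Real.sqrt_le_sqrt
        have hsq : ((√(2*π))⁻¹ * √(π/b))^2 = (2*b)⁻¹ := by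
          rw [mul_pow, inv_pow, Real.sq_sqrt (by positivity), Real.sq_sqrt (by positivity)]
          field_simp
        rw [hsq]
        have h2 : (2:ℝ)*4⁻¹ ≤ 2*b := by nlinarith
        have h3 := one_div_le_one_div_of_le (by norm_num) h2
        rw [one_div, one_div] at h3
        calc (2*b)⁻¹ ≤ ((2:ℝ)*4⁻¹)⁻¹ := h3
        _ = 2 := by norm_num

lemma pi_factor {n : ℕ} (f : Fin n → ℝ → ℝ) (hf : ∀ i, Integrable (f i) (gaussianReal 0 1)) :
    Integrable (fun g : Fin n → ℝ => ∏ i, f i (g i)) (Measure.pi fun _ => gaussianReal 0 1) ∧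
    ∫ g, ∏ i, f i (g i) ∂(Measure.pi fun _ : Fin n => gaussianReal 0 1)
      = ∏ i, ∫ x, f i x ∂(gaussianReal 0 1) := by
  letI : MeasureSpace ℝ := ⟨gaussianReal 0 1⟩
  haveI : SigmaFinite (volume : Measure ℝ) := inferInstanceAs (SigmaFinite (gaussianReal 0 1))
  have hpi : (Measure.pi fun _ : Fin n => gaussianReal 0 1) = (volume : Measure (Fin n → ℝ)) :=
    (volume_pi).symm
  rw [hpi]
  exact ⟨Integrable.fintype_prod hf, integral_fintype_prod_eq_prod f⟩

lemma key_gauss {n : ℕ} {D : ℝ} (hD : 0 < D) (y : Fin n → ℝ) (hy : ∑ i, y i ^ 2 ≤ D^2) :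
    Integrable (fun g : Fin n → ℝ => exp ((∑ i, g i * y i)^2 / (4*D^2)))
      (Measure.pi fun _ => gaussianReal 0 1) ∧
    ∫ g, exp ((∑ i, g i * y i)^2 / (4*D^2)) ∂(Measure.pi fun _ : Fin n => gaussianReal 0 1)
      ≤ √2 := by
  set γ := gaussianReal 0 1 with hγ
  set γn := (Measure.pi fun _ : Fin n => γ) with hγn
  set c : ℝ := (4*D^2)⁻¹ with hc
  have hcpos : 0 < c := by positivity
  set b : ℝ := √(2*c) with hbdef
  have hb2 : b^2 = 2*c := Real.sq_sqrt (by positivity)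
  set S : (Fin n → ℝ) → ℝ := fun g => ∑ i, g i * y i with hS
  have hdiv : ∀ s : ℝ, s^2 / (4*D^2) = c * s^2 := fun s => by
    rw [hc, div_eq_mul_inv, mul_comm]
  have hcD : c * D^2 = 4⁻¹ := by rw [hc]; field_simp
  have hmgf : ∀ s : ℝ, exp (c * s^2) = ∫ t, exp ((b*s) * t) ∂γ := by
    intro s
    rw [(gauss_mgf (b*s)).2]
    congr 1
    rw [mul_pow, hb2]; ring
  have hScont : Continuous S :=
    continuous_finset_sum _ fun i _ => (continuous_apply i).mul continuous_const
  -- crude integrability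
  have hcrude : Integrable (fun g => exp (c * S g ^ 2)) γn := by
    have hbnd : Integrable (fun g : Fin n → ℝ => ∏ i, exp (4⁻¹ * (g i)^2)) γn :=
      (pi_factor _ (fun _ => (gauss_sq (by norm_num) le_rfl).1)).1
    refine hbnd.mono' ?_ (ae_of_all _ fun g => ?_)
    · exact (Real.continuous_exp.comp (continuous_const.mul (hScont.pow 2))).aestronglyMeasurable
    · rw [Real.norm_of_nonneg (Real.exp_pos _).le, ← Real.exp_sum]
      apply Real.exp_le_exp.2
      have hcs : S g ^ 2 ≤ (∑ i, g i ^2) * (∑ i, y i ^2) :=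
        Finset.sum_mul_sq_le_sq_mul_sq Finset.univ g y
      have : c * S g ^2 ≤ c * ((∑ i, g i ^2) * D^2) := by
        apply mul_le_mul_of_nonneg_left _ hcpos.le
        exact hcs.trans (mul_le_mul_of_nonneg_left hy (by positivity))
      refine this.trans (le_of_eq ?_)
      rw [mul_comm (∑ i, g i ^2) (D^2), ← mul_assoc, hcD, Finset.mul_sum]
  have hFcont : Continuous (fun p : (Fin n → ℝ) × ℝ => exp ((b * S p.1) * p.2)) :=
    Real.continuous_exp.comp
      ((continuous_const.mul (hScont.comp continuous_fst)).mul continuous_snd)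
  have hFint : Integrable (fun p : (Fin n → ℝ) × ℝ => exp ((b * S p.1) * p.2)) (γn.prod γ) := by
    refine (integrable_prod_iff hFcont.aestronglyMeasurable).2
      ⟨ae_of_all _ fun g => (gauss_mgf (b * S g)).1, ?_⟩
    have heq : (fun g => ∫ t, ‖exp ((b * S g) * t)‖ ∂γ) = fun g => exp (c * S g ^ 2) := by
      ext g
      simp_rw [Real.norm_of_nonneg (Real.exp_pos _).le]
      rw [(gauss_mgf (b * S g)).2]
      congr 1; rw [mul_pow, hb2]; ring
    rw [heq]
    exact hcrude
  have hswap : ∫ g, exp (c * S g ^2) ∂γn = ∫ t, ∫ g, exp ((b * S g) * t) ∂γn ∂γ := by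
    rw [show (fun g => exp (c * S g ^2)) = fun g => ∫ t, exp ((b * S g) * t) ∂γ from
      funext fun g => hmgf (S g)]
    exact integral_integral_swap hFint
  have hinner : ∀ t : ℝ, ∫ g, exp ((b * S g) * t) ∂γn = exp ((c * ∑ i, y i ^2) * t^2) := by
    intro t
    have h1 : (fun g : Fin n → ℝ => exp ((b * S g) * t))
        = fun g => ∏ i, exp ((b * t * y i) * (g i)) := by
      ext g
      rw [← Real.exp_sum]
      congr 1
      rw [hS]
      simp only
      rw [Finset.mul_sum, Finset.sum_mul]
      exact Finset.sum_congr rfl fun i _ => by ring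
    rw [h1, (pi_factor _ (fun i => (gauss_mgf (b*t*y i)).1)).2]
    simp_rw [(gauss_mgf _).2]
    rw [← Real.exp_sum]
    congr 1
    calc ∑ i, (b*t*y i)^2/2 = ∑ i, c * y i ^2 * t^2 :=
          Finset.sum_congr rfl (fun i _ => by rw [mul_pow, mul_pow, hb2]; ring)
    _ = (c * ∑ i, y i ^2) * t^2 := by rw [← Finset.sum_mul, ← Finset.mul_sum]
  have hgoal : (fun g : Fin n → ℝ => exp ((∑ i, g i * y i)^2 / (4*D^2)))
      = fun g => exp (c * S g ^2) := funext fun g => by rw [hdiv]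
  have ha0 : 0 ≤ c * ∑ i, y i ^2 :=
    mul_nonneg hcpos.le (Finset.sum_nonneg fun i _ => sq_nonneg _)
  have ha4 : c * ∑ i, y i ^2 ≤ 4⁻¹ := by
    rw [← hcD]; exact mul_le_mul_of_nonneg_left hy hcpos.le
  refine ⟨by rw [hgoal]; exact hcrude, ?_⟩
  rw [hgoal, hswap]
  calc ∫ t, ∫ g, exp ((b * S g) * t) ∂γn ∂γ = ∫ t, exp ((c * ∑ i, y i ^2) * t^2) ∂γ := by
        simp_rw [hinner]
  _ ≤ √2 := (gauss_sq ha0 ha4).2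


/-- The ψ_2(ν) norm of the linear functional `⟨t,·⟩` on `ℝ^n`. -/
noncomputable def psi2LinNorm {n : ℕ} (ν : Measure (Fin n → ℝ)) (t : Fin n → ℝ) : ℝ :=
  sInf {u : ℝ | 0 < u ∧ ∫ y, Real.exp ((∑ i, t i * y i) ^ 2 / u ^ 2) ∂ν ≤ 2}

lemma aux_exp {a Z : ℝ} (ha : 0 ≤ a) (hZ : 1 ≤ Z) : exp (a / Z) ≤ 1 + (exp a - 1)/Z := by
  have hZ0 : (0:ℝ) < Z := lt_of_lt_of_le one_pos hZ
  have hinv : Z⁻¹ ≤ 1 := by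
    nlinarith [mul_inv_cancel₀ (ne_of_gt hZ0), inv_nonneg.2 hZ0.le]
  have hw1 : (0:ℝ) ≤ 1 - Z⁻¹ := by linarith
  have h := convexOn_exp.2 (Set.mem_univ (0:ℝ)) (Set.mem_univ a) hw1 (inv_nonneg.2 hZ0.le)
    (by ring)
  simp only [smul_eq_mul, mul_zero, zero_add, Real.exp_zero, mul_one] at h
  calc exp (a/Z) = exp (Z⁻¹ * a) := by rw [div_eq_mul_inv, mul_comm]
  _ ≤ 1 - Z⁻¹ + Z⁻¹ * exp a := h
  _ = 1 + (exp a - 1)/Z := by rw [div_eq_mul_inv]; ring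

lemma exponent_bound {n : ℕ} {D : ℝ} (hD : 0 < D) (g y : Fin n → ℝ)
    (hy : ∑ i, y i ^ 2 ≤ D^2) :
    (∑ i, g i * y i)^2/(4*D^2) ≤ (∑ i, g i ^ 2)/4 := by
  rw [div_le_div_iff₀ (by positivity) (by positivity)]
  have hcs := Finset.sum_mul_sq_le_sq_mul_sq Finset.univ g y
  have hg0 : (0:ℝ) ≤ ∑ i, g i ^ 2 := Finset.sum_nonneg (fun i _ => sq_nonneg _)
  nlinarith

lemma cont_inner {n : ℕ} (g : Fin n → ℝ) (u : ℝ) :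
    Continuous (fun y : Fin n → ℝ => exp ((∑ i, g i * y i)^2 / u)) :=
  Real.continuous_exp.comp
    (((continuous_finset_sum _ fun i _ => continuous_const.mul (continuous_apply i)).pow 2).div_const u)

lemma inner_integrable {n : ℕ} {ν : Measure (Fin n → ℝ)} [IsProbabilityMeasure ν] {D : ℝ}
    (hD : 0 < D) (hsupp' : ∀ᵐ y ∂ν, ∑ i, y i ^ 2 ≤ D^2) (g : Fin n → ℝ) :
    Integrable (fun y => exp ((∑ i, g i * y i)^2 / (4*D^2))) ν := by
  refine Integrable.mono' (integrable_const (exp ((∑ i, g i ^ 2)/4)))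
    (cont_inner g _).aestronglyMeasurable ?_
  filter_upwards [hsupp'] with y hy
  rw [Real.norm_of_nonneg (Real.exp_pos _).le]
  exact Real.exp_le_exp.2 (exponent_bound hD g y hy)

lemma pointwise_bound {n : ℕ} {ν : Measure (Fin n → ℝ)} [IsProbabilityMeasure ν] {D : ℝ}
    (hD : 0 < D) (hsupp' : ∀ᵐ y ∂ν, ∑ i, y i ^ 2 ≤ D^2) (g : Fin n → ℝ) :
    psi2LinNorm ν g ≤ D * (1 + ∫ y, exp ((∑ i, g i * y i)^2 / (4*D^2)) ∂ν) := by
  set Z : ℝ := ∫ y, exp ((∑ i, g i * y i)^2 / (4*D^2)) ∂ν with hZdef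
  have hint := inner_integrable hD hsupp' g
  have hZ1 : 1 ≤ Z := by
    rw [hZdef]
    calc (1:ℝ) = ∫ _y, (1:ℝ) ∂ν := by simp
    _ ≤ _ := integral_mono (integrable_const 1) hint
          (fun y => Real.one_le_exp (by positivity))
  have hZ0 : (0:ℝ) < Z := lt_of_lt_of_le one_pos hZ1
  set u : ℝ := 2*D*√Z with hudef
  have hu : 0 < u := by
    apply mul_pos (by positivity) (Real.sqrt_pos.2 hZ0)
  have husq : u^2 = 4*D^2*Z := by
    rw [hudef, mul_pow, mul_pow, Real.sq_sqrt hZ0.le]; ring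
  have hmem : ∫ y, exp ((∑ i, g i * y i)^2 / u^2) ∂ν ≤ 2 := by
    have hptw : ∀ y : Fin n → ℝ, exp ((∑ i, g i * y i)^2 / u^2)
        ≤ 1 + (exp ((∑ i, g i * y i)^2 / (4*D^2)) - 1)/Z := by
      intro y
      rw [husq, div_mul_eq_div_div]
      exact aux_exp (by positivity) hZ1
    have hdiv : Integrable (fun y => (exp ((∑ i, g i * y i)^2 / (4*D^2)) - 1)/Z) ν :=
      (hint.sub (integrable_const 1)).div_const Z
    have hrhs : Integrable
        (fun y => 1 + (exp ((∑ i, g i * y i)^2 / (4*D^2)) - 1)/Z) ν :=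
      (integrable_const 1).add hdiv
    have hlhs : Integrable (fun y => exp ((∑ i, g i * y i)^2 / u^2)) ν := by
      refine Integrable.mono' hrhs (cont_inner g _).aestronglyMeasurable
        (ae_of_all _ fun y => ?_)
      rw [Real.norm_of_nonneg (Real.exp_pos _).le]
      exact hptw y
    calc ∫ y, exp ((∑ i, g i * y i)^2 / u^2) ∂ν
        ≤ ∫ y, (1 + (exp ((∑ i, g i * y i)^2 / (4*D^2)) - 1)/Z) ∂ν :=
          integral_mono hlhs hrhs hptw
    _ = 1 + (Z - 1)/Z := by
          rw [integral_add (integrable_const 1) hdiv,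
            integral_div, integral_sub hint (integrable_const 1)]
          simp [hZdef]
    _ ≤ 2 := by
          have : (Z-1)/Z ≤ 1 := div_le_one_of_le₀ (by linarith) hZ0.le
          linarith
  have hle : psi2LinNorm ν g ≤ u := by
    apply csInf_le ⟨0, fun x hx => hx.1.le⟩
    exact ⟨hu, hmem⟩
  refine hle.trans ?_
  have h2 : 2*√Z ≤ 1 + Z := by
    nlinarith [sq_nonneg (√Z - 1), Real.sq_sqrt hZ0.le, Real.sqrt_nonneg Z]
  calc u = D * (2*√Z) := by rw [hudef]; ring
  _ ≤ D * (1 + Z) := mul_le_mul_of_nonneg_left h2 hD.le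

/-- There is an absolute constant `c > 0` such that if `ν` is a probability
measure on `ℝ^n` supported in the Euclidean ball of radius `D`, then the
Gaussian mean width of the ψ_2(ν) norm satisfies `ℓ_E ≤ c D`. -/
theorem gaussian_mean_width_psi2 :
    ∃ c : ℝ, 0 < c ∧
      ∀ (n : ℕ) (ν : Measure (Fin n → ℝ)), IsProbabilityMeasure ν →
        ∀ D : ℝ, 0 < D →
        (∀ᵐ y ∂ν, Real.sqrt (∑ i, y i ^ 2) ≤ D) →
        (∀ t : Fin n → ℝ,
          {u : ℝ | 0 < u ∧ ∫ y, Real.exp ((∑ i, t i * y i) ^ 2 / u ^ 2) ∂ν ≤ 2}.Nonempty) →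
        ∫ g, psi2LinNorm ν g ∂(Measure.pi fun _ : Fin n => gaussianReal 0 1) ≤
          c * D := by
  refine ⟨4, by norm_num, ?_⟩
  intro n ν hν D hD hsupp hne
  haveI := hν
  have hsupp' : ∀ᵐ y ∂ν, ∑ i, y i ^ 2 ≤ D^2 := by
    filter_upwards [hsupp] with y hy
    have h0 : (0:ℝ) ≤ ∑ i, y i ^ 2 := Finset.sum_nonneg fun i _ => sq_nonneg _
    calc ∑ i, y i ^ 2 = (√(∑ i, y i ^ 2))^2 := (Real.sq_sqrt h0).symm
    _ ≤ D^2 := pow_le_pow_left₀ (Real.sqrt_nonneg _) hy 2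
  set γn := (Measure.pi fun _ : Fin n => gaussianReal 0 1) with hγn
  have hZnn : ∀ g : Fin n → ℝ, 0 ≤ ∫ y, exp ((∑ i, g i * y i)^2/(4*D^2)) ∂ν :=
    fun g => integral_nonneg fun y => (Real.exp_pos _).le
  have hψnn : ∀ g : Fin n → ℝ, 0 ≤ psi2LinNorm ν g :=
    fun g => le_csInf (hne g) fun b hb => hb.1.le
  have hpt : ∀ g : Fin n → ℝ, psi2LinNorm ν g
      ≤ D * (1 + ∫ y, exp ((∑ i, g i * y i)^2/(4*D^2)) ∂ν) :=
    fun g => pointwise_bound hD hsupp' g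
  have hFcont : Continuous
      (fun p : (Fin n → ℝ) × (Fin n → ℝ) => exp ((∑ i, p.1 i * p.2 i)^2/(4*D^2))) :=
    Real.continuous_exp.comp
      (((continuous_finset_sum _ fun i _ =>
        ((continuous_apply i).comp continuous_fst).mul
        ((continuous_apply i).comp continuous_snd)).pow 2).div_const _)
  have hZmeas : AEStronglyMeasurable
      (fun g : Fin n → ℝ => ∫ y, exp ((∑ i, g i * y i)^2/(4*D^2)) ∂ν) γn :=
    (hFcont.stronglyMeasurable.integral_prod_right').aestronglyMeasurable
  have hbint : Integrable (fun g : Fin n → ℝ => ∏ i, exp (4⁻¹ * (g i)^2)) γn :=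
    (pi_factor _ fun _ => (gauss_sq (by norm_num) le_rfl).1).1
  have hZbd : ∀ g : Fin n → ℝ,
      (∫ y, exp ((∑ i, g i * y i)^2/(4*D^2)) ∂ν) ≤ ∏ i, exp (4⁻¹ * (g i)^2) := by
    intro g
    have h1 : (∫ y, exp ((∑ i, g i * y i)^2/(4*D^2)) ∂ν)
        ≤ ∫ _y, exp ((∑ i, g i ^ 2)/4) ∂ν :=
      integral_mono_ae (inner_integrable hD hsupp' g) (integrable_const _)
        (by filter_upwards [hsupp'] with y hy
            exact Real.exp_le_exp.2 (exponent_bound hD g y hy))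
    refine h1.trans (le_of_eq ?_)
    rw [integral_const, probReal_univ, one_smul, ← Real.exp_sum]
    congr 1
    rw [Finset.sum_div]
    exact Finset.sum_congr rfl fun i _ => by ring
  have hZint : Integrable
      (fun g : Fin n → ℝ => ∫ y, exp ((∑ i, g i * y i)^2/(4*D^2)) ∂ν) γn :=
    Integrable.mono' hbint hZmeas
      (ae_of_all _ fun g => by rw [Real.norm_of_nonneg (hZnn g)]; exact hZbd g)
  have hprod : Integrable
      (fun p : (Fin n → ℝ) × (Fin n → ℝ) => exp ((∑ i, p.1 i * p.2 i)^2/(4*D^2)))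
      (γn.prod ν) := by
    refine (integrable_prod_iff hFcont.aestronglyMeasurable).2
      ⟨ae_of_all _ fun g => inner_integrable hD hsupp' g, ?_⟩
    have heq : (fun g : Fin n → ℝ => ∫ y, ‖exp ((∑ i, g i * y i)^2/(4*D^2))‖ ∂ν)
        = fun g : Fin n → ℝ => ∫ y, exp ((∑ i, g i * y i)^2/(4*D^2)) ∂ν :=
      funext fun g => by simp_rw [Real.norm_of_nonneg (Real.exp_pos _).le]
    rw [heq]
    exact hZint
  have hswap : ∫ g, (∫ y, exp ((∑ i, g i * y i)^2/(4*D^2)) ∂ν) ∂γn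
      = ∫ y, (∫ g, exp ((∑ i, g i * y i)^2/(4*D^2)) ∂γn) ∂ν :=
    integral_integral_swap hprod
  have hZle : (∫ g, (∫ y, exp ((∑ i, g i * y i)^2/(4*D^2)) ∂ν) ∂γn) ≤ √2 := by
    rw [hswap]
    calc ∫ y, (∫ g, exp ((∑ i, g i * y i)^2/(4*D^2)) ∂γn) ∂ν
        ≤ ∫ _y, √2 ∂ν := by
          refine integral_mono_of_nonneg
            (ae_of_all _ fun y => integral_nonneg fun g => (Real.exp_pos _).le)
            (integrable_const _) ?_
          filter_upwards [hsupp'] with y hy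
          exact (key_gauss hD y hy).2
    _ = √2 := by simp
  calc ∫ g, psi2LinNorm ν g ∂γn
      ≤ ∫ g, D * (1 + ∫ y, exp ((∑ i, g i * y i)^2/(4*D^2)) ∂ν) ∂γn :=
        integral_mono_of_nonneg (ae_of_all _ hψnn)
          (((integrable_const 1).add hZint).const_mul D) (ae_of_all _ hpt)
  _ = D * (1 + ∫ g, (∫ y, exp ((∑ i, g i * y i)^2/(4*D^2)) ∂ν) ∂γn) := by
        rw [integral_const_mul, integral_add (integrable_const 1) hZint, integral_const,
          probReal_univ, one_smul]
  _ ≤ D * (1 + √2) := mul_le_mul_of_nonneg_left (by linarith) hD.le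
  _ ≤ 4 * D := by
        nlinarith [Real.sq_sqrt (show (0:ℝ) ≤ 2 by norm_num), Real.sqrt_nonneg 2]
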